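/- In the auction signaling setting with n bidders, M states, prior λ, valuation matrices V^1,…,V^r with probabilities ρ_t, and k signals: define N_ε = { w(Y) : Y a multiset of Θ with |Y| = ⌈2 ln(4nr)/ε²⌉ }, where w(Y) ∈ [n]^r is given by w_t(Y) = argmax_{i∈[n]} (1/|Y|)Σ_{θ∈Y} V^t(i,θ). Then max_{|W|=k, W⊆N_ε} welfare(W) ≥ max_{|W|=k, W⊆[n]^r} welfare(W) − ε, where welfare(W) = Σ_{θ∈Θ} max_{w∈W} Σ_t ρ_t λ(θ) V^t(w(t),θ). -/

import Mathlib

noncomputable section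
open Finset

/-- Maximum of `g` over the finite set `W`, with the max over the empty set taken to be 0. -/
def fmax {ι : Type*} (W : Finset ι) (g : ι → ℝ) : ℝ :=
  if h : W.Nonempty then W.sup' h g else 0

/-- Hoeffding's lemma, function form. -/
lemma hoeffding_fun_ineq {p : ℝ} (hp0 : 0 ≤ p) (hp1 : p ≤ 1) (s : ℝ) :
    1 - p + p * Real.exp s ≤ Real.exp (s * p + s ^ 2 / 8) := by
  -- D s = 1 - p + p * exp s > 0
  set D : ℝ → ℝ := fun x => 1 - p + p * Real.exp x with hD
  have hDpos : ∀ x, 0 < D x := by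
    intro x
    rcases eq_or_lt_of_le hp0 with h | h
    · simp only [hD, ← h]; norm_num
    · have h1 : 0 < p * Real.exp x := by positivity
      have h2 : 0 ≤ 1 - p := by linarith
      simp only [hD]; linarith
  set g : ℝ → ℝ := fun x => p * Real.exp x / D x with hg
  have hDd : ∀ x, HasDerivAt D (p * Real.exp x) x := by
    intro x
    exact ((Real.hasDerivAt_exp x).const_mul p).const_add (1 - p)
  have hgd : ∀ x, HasDerivAt g (g x * (1 - g x)) x := by
    intro x
    have h1 : HasDerivAt (fun x => p * Real.exp x) (p * Real.exp x) x :=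
      (Real.hasDerivAt_exp x).const_mul p
    have h2 := h1.div (hDd x) (hDpos x).ne'
    refine h2.congr_deriv ?_
    have hDx := (hDpos x).ne'
    simp only [hg]
    field_simp
  have hg01 : ∀ x, 0 ≤ g x ∧ g x ≤ 1 := by
    intro x
    have h1 : 0 ≤ p * Real.exp x := by positivity
    have h2 : p * Real.exp x ≤ D x := by simp only [hD]; linarith
    constructor
    · exact div_nonneg h1 (hDpos x).le
    · rw [div_le_one (hDpos x)]; exact h2
  have hgderiv_le : ∀ x, g x * (1 - g x) ≤ 1 / 4 := by
    intro x
    nlinarith [sq_nonneg (2 * g x - 1)]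
  have hgderiv_nonneg : ∀ x, 0 ≤ g x * (1 - g x) := by
    intro x
    nlinarith [(hg01 x).1, (hg01 x).2]
  -- slope bound on g
  have hslope : ∀ a b : ℝ, a ≤ b → g b - g a ≤ (b - a) / 4 ∧ 0 ≤ g b - g a := by
    intro a b hab
    rcases eq_or_lt_of_le hab with rfl | hab
    · simp
    · have hcont : ContinuousOn g (Set.Icc a b) := fun x _ => ((hgd x).continuousAt).continuousWithinAt
      obtain ⟨c, _, hc⟩ := exists_hasDerivAt_eq_slope g (fun x => g x * (1 - g x)) hab hcont
        (fun x _ => hgd x)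
      have hba : 0 < b - a := by linarith
      constructor
      · have : (g b - g a) / (b - a) ≤ 1 / 4 := hc ▸ hgderiv_le c
        calc g b - g a = (g b - g a) / (b - a) * (b - a) := by field_simp
          _ ≤ 1 / 4 * (b - a) := by nlinarith
          _ = (b - a) / 4 := by ring
      · have h1 : 0 ≤ (g b - g a) / (b - a) := hc ▸ hgderiv_nonneg c
        by_contra hneg
        push_neg at hneg
        have := div_neg_of_neg_of_pos (by linarith : g b - g a < 0) hba
        linarith
  -- h s = log (D s) - s*p - s^2/8
  set h : ℝ → ℝ := fun x => Real.log (D x) - x * p - x ^ 2 / 8 with hh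
  have hg0 : g 0 = p := by simp [hg, hD]
  have hhd : ∀ x, HasDerivAt h (g x - p - x / 4) x := by
    intro x
    have h1 : HasDerivAt (fun x => Real.log (D x)) (p * Real.exp x / D x) x :=
      (hDd x).log (hDpos x).ne'
    have h2 : HasDerivAt (fun x : ℝ => x * p) p x := by
      simpa using (hasDerivAt_id x).mul_const p
    have h3 : HasDerivAt (fun x : ℝ => x ^ 2 / 8) (x / 4) x := by
      have := (hasDerivAt_pow 2 x).div_const 8
      refine this.congr_deriv ?_
      norm_num
      ring
    exact (h1.sub h2).sub h3
  have hh0 : h 0 = 0 := by simp [hh, hD]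
  have hhle : ∀ x, h x ≤ 0 := by
    intro x
    rcases le_total 0 x with hx | hx
    · rcases eq_or_lt_of_le hx with rfl | hx
      · exact hh0.le
      · have hcont : ContinuousOn h (Set.Icc 0 x) := fun u _ => ((hhd u).continuousAt).continuousWithinAt
        obtain ⟨c, hc0, hc⟩ := exists_hasDerivAt_eq_slope h (fun u => g u - p - u / 4) hx hcont
          (fun u _ => hhd u)
        have hcpos : 0 ≤ c := hc0.1.le
        have hslope1 := (hslope 0 c hcpos).1
        rw [hg0] at hslope1
        have hder : g c - p - c / 4 ≤ 0 := by linarith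
        rw [hc] at hder
        rw [hh0] at hder
        have : (h x - 0) / (x - 0) ≤ 0 := hder
        have hxpos : 0 < x - 0 := by linarith
        by_contra hpos
        push_neg at hpos
        have := div_pos (by linarith : 0 < h x - 0) hxpos
        linarith
    · rcases eq_or_lt_of_le hx with rfl | hx
      · exact hh0.le
      · have hcont : ContinuousOn h (Set.Icc x 0) := fun u _ => ((hhd u).continuousAt).continuousWithinAt
        obtain ⟨c, hc0, hc⟩ := exists_hasDerivAt_eq_slope h (fun u => g u - p - u / 4) hx hcont
          (fun u _ => hhd u)
        have hcneg : c ≤ 0 := hc0.2.le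
        have hslope1 := (hslope c 0 hcneg).1
        rw [hg0] at hslope1
        have hder : 0 ≤ g c - p - c / 4 := by linarith
        rw [hc, hh0] at hder
        have hxneg : 0 < 0 - x := by linarith
        have := div_nonneg_iff.mp hder
        rcases this with ⟨h1, _⟩ | ⟨h1, h2⟩
        · nlinarith
        · nlinarith
  have := hhle s
  have hlog : Real.log (D s) ≤ s * p + s ^ 2 / 8 := by simp only [hh] at this; linarith
  calc D s = Real.exp (Real.log (D s)) := (Real.exp_log (hDpos s)).symm
    _ ≤ Real.exp (s * p + s ^ 2 / 8) := Real.exp_le_exp.mpr hlog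

lemma mgf_bound {M : ℕ} (q : Fin M → ℝ) (hq0 : ∀ θ, 0 ≤ q θ) (hq1 : ∑ θ, q θ = 1)
    (f : Fin M → ℝ) (hf0 : ∀ θ, 0 ≤ f θ) (hf1 : ∀ θ, f θ ≤ 1) (s : ℝ) :
    ∑ θ, q θ * Real.exp (s * f θ) ≤ Real.exp (s * (∑ θ, q θ * f θ) + s ^ 2 / 8) := by
  set e := ∑ θ, q θ * f θ with he
  have he0 : 0 ≤ e := Finset.sum_nonneg fun θ _ => mul_nonneg (hq0 θ) (hf0 θ)
  have he1 : e ≤ 1 := by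
    calc e ≤ ∑ θ, q θ := Finset.sum_le_sum fun θ _ => by
            nlinarith [hq0 θ, hf1 θ]
      _ = 1 := hq1
  have hconv : ∀ θ, Real.exp (s * f θ) ≤ 1 - f θ + f θ * Real.exp s := by
    intro θ
    have := convexOn_exp.2 (Set.mem_univ (0 : ℝ)) (Set.mem_univ s)
      (by linarith [hf1 θ] : (0:ℝ) ≤ 1 - f θ) (hf0 θ) (by ring)
    simpa [smul_eq_mul, mul_comm] using this
  calc ∑ θ, q θ * Real.exp (s * f θ)
      ≤ ∑ θ, q θ * (1 - f θ + f θ * Real.exp s) :=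
        Finset.sum_le_sum fun θ _ => mul_le_mul_of_nonneg_left (hconv θ) (hq0 θ)
    _ = 1 - e + e * Real.exp s := by
        have hcong : ∀ θ ∈ Finset.univ, q θ * (1 - f θ + f θ * Real.exp s)
            = q θ - q θ * f θ + q θ * f θ * Real.exp s := fun θ _ => by ring
        rw [Finset.sum_congr rfl hcong, Finset.sum_add_distrib, Finset.sum_sub_distrib,
          ← Finset.sum_mul, hq1, ← he]
    _ ≤ Real.exp (s * e + s ^ 2 / 8) := hoeffding_fun_ineq he0 he1 s

lemma chernoff {M m : ℕ} (q : Fin M → ℝ) (hq0 : ∀ θ, 0 ≤ q θ) (hq1 : ∑ θ, q θ = 1)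
    (f : Fin M → ℝ) (hf0 : ∀ θ, 0 ≤ f θ) (hf1 : ∀ θ, f θ ≤ 1) (δ : ℝ) (hδ : 0 < δ)
    (P : (Fin m → Fin M) → Prop) [DecidablePred P]
    (hP : ∀ y, P y → (m : ℝ) * ((∑ θ, q θ * f θ) + δ) ≤ ∑ j, f (y j)) :
    ∑ y ∈ Finset.univ.filter P, ∏ j, q (y j) ≤ Real.exp (-(2 * m * δ ^ 2)) := by
  set s : ℝ := 4 * δ with hs
  set e := ∑ θ, q θ * f θ with he
  have hQ0 : ∀ y : Fin m → Fin M, 0 ≤ ∏ j, q (y j) :=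
    fun y => Finset.prod_nonneg fun j _ => hq0 (y j)
  have step1 : ∑ y ∈ Finset.univ.filter P, ∏ j, q (y j)
      ≤ ∑ y : Fin m → Fin M, (∏ j, q (y j)) * Real.exp (s * ((∑ j, f (y j)) - m * (e + δ))) := by
    refine le_trans (Finset.sum_le_sum ?_) (Finset.sum_le_sum_of_subset_of_nonneg
      (Finset.filter_subset _ _) (fun y _ _ => mul_nonneg (hQ0 y) (Real.exp_nonneg _)))
    intro y hy
    rw [Finset.mem_filter] at hy
    have h1 : (0:ℝ) ≤ s * ((∑ j, f (y j)) - m * (e + δ)) :=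
      mul_nonneg (by linarith) (by linarith [hP y hy.2])
    nlinarith [hQ0 y, Real.one_le_exp h1]
  have step2 : ∀ y : Fin m → Fin M,
      (∏ j, q (y j)) * Real.exp (s * ((∑ j, f (y j)) - m * (e + δ)))
        = Real.exp (-(s * m * (e + δ))) * ∏ j, (q (y j) * Real.exp (s * f (y j))) := by
    intro y
    rw [Finset.prod_mul_distrib, ← Real.exp_sum]
    rw [show Real.exp (-(s * (m:ℝ) * (e + δ))) * ((∏ j, q (y j)) * Real.exp (∑ j, s * f (y j)))
        = (∏ j, q (y j)) * (Real.exp (∑ j, s * f (y j)) * Real.exp (-(s * (m:ℝ) * (e + δ)))) from by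
      ring]
    rw [← Real.exp_add]
    congr 2
    rw [mul_sub, Finset.mul_sum]
    ring
  have step3 : ∑ y : Fin m → Fin M, ∏ j, (q (y j) * Real.exp (s * f (y j)))
      = (∑ θ, q θ * Real.exp (s * f θ)) ^ m := (Fintype.sum_pow (fun θ => q θ * Real.exp (s * f θ)) m).symm
  have step4 : (∑ θ, q θ * Real.exp (s * f θ)) ^ m ≤ Real.exp (s * e + s ^ 2 / 8) ^ m :=
    pow_le_pow_left₀ (Finset.sum_nonneg fun θ _ => mul_nonneg (hq0 θ) (Real.exp_nonneg _))
      (mgf_bound q hq0 hq1 f hf0 hf1 s) m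
  calc ∑ y ∈ Finset.univ.filter P, ∏ j, q (y j)
      ≤ ∑ y : Fin m → Fin M, (∏ j, q (y j)) * Real.exp (s * ((∑ j, f (y j)) - m * (e + δ))) := step1
    _ = Real.exp (-(s * m * (e + δ))) * ∑ y : Fin m → Fin M, ∏ j, (q (y j) * Real.exp (s * f (y j))) := by
        rw [Finset.mul_sum]; exact Finset.sum_congr rfl fun y _ => step2 y
    _ ≤ Real.exp (-(s * m * (e + δ))) * Real.exp (s * e + s ^ 2 / 8) ^ m := by
        rw [step3]
        exact mul_le_mul_of_nonneg_left step4 (Real.exp_nonneg _)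
    _ = Real.exp (-(2 * m * δ ^ 2)) := by
        rw [← Real.exp_nat_mul, ← Real.exp_add]
        congr 1
        rw [hs]
        ring

lemma exists_good_sample {M m n r : ℕ}
    (q : Fin M → ℝ) (hq0 : ∀ θ, 0 ≤ q θ) (hq1 : ∑ θ, q θ = 1)
    (V : Fin r → Fin n → Fin M → ℝ) (hV : ∀ t i θ, V t i θ ∈ Set.Icc (0:ℝ) 1)
    (δ : ℝ) (hδ : 0 < δ)
    (hsmall : 2 * ((n : ℝ) * r) * Real.exp (-(2 * m * δ ^ 2)) < 1) :
    ∃ y : Fin m → Fin M,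
      ∀ t i, |(∑ j, V t i (y j)) - m * (∑ θ, q θ * V t i θ)| < m * δ := by
  classical
  by_contra hcon
  push_neg at hcon
  -- hcon : ∀ y, ∃ t i, m * δ ≤ |...|
  set Q : (Fin m → Fin M) → ℝ := fun y => ∏ j, q (y j) with hQ
  have hQ0 : ∀ y, 0 ≤ Q y := fun y => Finset.prod_nonneg fun j _ => hq0 (y j)
  have hQ1 : ∑ y : Fin m → Fin M, Q y = 1 := by
    have h := Fintype.sum_pow q m
    rw [hq1, one_pow] at h
    exact h.symm
  set Pu : Fin r × Fin n → (Fin m → Fin M) → Prop := fun ti y =>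
    (m : ℝ) * ((∑ θ, q θ * V ti.1 ti.2 θ) + δ) ≤ ∑ j, V ti.1 ti.2 (y j) with hPu
  set Pl : Fin r × Fin n → (Fin m → Fin M) → Prop := fun ti y =>
    (m : ℝ) * ((∑ θ, q θ * (1 - V ti.1 ti.2 θ)) + δ) ≤ ∑ j, (1 - V ti.1 ti.2 (y j)) with hPl
  have key : ∀ y : Fin m → Fin M, ∃ ti : Fin r × Fin n, Pu ti y ∨ Pl ti y := by
    intro y
    obtain ⟨t, i, hti⟩ := hcon y
    refine ⟨(t, i), ?_⟩
    rcases le_abs.mp hti with h | h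
    · left
      simp only [hPu]
      push_cast
      linarith
    · right
      simp only [hPl]
      have h1 : ∑ θ, q θ * (1 - V t i θ) = 1 - ∑ θ, q θ * V t i θ := by
        rw [Finset.sum_congr rfl (fun θ _ => mul_one_sub (q θ) (V t i θ)),
          Finset.sum_sub_distrib, hq1]
      have h2 : ∑ j, (1 - V t i (y j)) = (m : ℝ) - ∑ j, V t i (y j) := by
        rw [Finset.sum_sub_distrib, Finset.sum_const, Finset.card_univ, Fintype.card_fin,
          nsmul_eq_mul, mul_one]
      rw [h1, h2]
      push_cast
      linarith
  have bound : (1 : ℝ) ≤ ∑ ti : Fin r × Fin n,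
      ((∑ y ∈ Finset.univ.filter (Pu ti), Q y) + ∑ y ∈ Finset.univ.filter (Pl ti), Q y) := by
    have step : ∀ y : Fin m → Fin M, Q y ≤ ∑ ti : Fin r × Fin n,
        ((if Pu ti y then Q y else 0) + (if Pl ti y then Q y else 0)) := by
      intro y
      obtain ⟨ti, hti⟩ := key y
      have h1 : Q y ≤ (if Pu ti y then Q y else 0) + (if Pl ti y then Q y else 0) := by
        rcases hti with h | h
        · rw [if_pos h]
          split <;> [linarith [hQ0 y]; linarith]
        · rw [if_pos h]
          split <;> [linarith [hQ0 y]; linarith]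
      refine le_trans h1 (Finset.single_le_sum (f := fun ti =>
        (if Pu ti y then Q y else 0) + (if Pl ti y then Q y else 0)) ?_ (Finset.mem_univ ti))
      intro c _
      have := hQ0 y
      show (0:ℝ) ≤ (if Pu c y then Q y else 0) + (if Pl c y then Q y else 0)
      split <;> split <;> simp <;> linarith
    calc (1:ℝ) = ∑ y : Fin m → Fin M, Q y := hQ1.symm
      _ ≤ ∑ y : Fin m → Fin M, ∑ ti : Fin r × Fin n,
            ((if Pu ti y then Q y else 0) + (if Pl ti y then Q y else 0)) :=
          Finset.sum_le_sum fun y _ => step y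
      _ = ∑ ti : Fin r × Fin n,
            ((∑ y ∈ Finset.univ.filter (Pu ti), Q y) + ∑ y ∈ Finset.univ.filter (Pl ti), Q y) := by
          rw [Finset.sum_comm]
          refine Finset.sum_congr rfl fun ti _ => ?_
          rw [Finset.sum_add_distrib, Finset.sum_filter, Finset.sum_filter]
  have cher : ∀ ti : Fin r × Fin n,
      (∑ y ∈ Finset.univ.filter (Pu ti), Q y) + ∑ y ∈ Finset.univ.filter (Pl ti), Q y
        ≤ 2 * Real.exp (-(2 * m * δ ^ 2)) := by
    intro ti
    have h1 := chernoff q hq0 hq1 (V ti.1 ti.2) (fun θ => (hV ti.1 ti.2 θ).1)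
      (fun θ => (hV ti.1 ti.2 θ).2) δ hδ (Pu ti) (fun y hy => hy)
    have h2 := chernoff q hq0 hq1 (fun θ => 1 - V ti.1 ti.2 θ)
      (fun θ => by show (0:ℝ) ≤ 1 - V ti.1 ti.2 θ; linarith [(hV ti.1 ti.2 θ).2])
      (fun θ => by show 1 - V ti.1 ti.2 θ ≤ (1:ℝ); linarith [(hV ti.1 ti.2 θ).1])
      δ hδ (Pl ti) (fun y hy => hy)
    simp only [hQ]
    linarith
  have final : (1 : ℝ) ≤ ((n : ℝ) * r) * (2 * Real.exp (-(2 * m * δ ^ 2))) := by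
    refine le_trans bound ?_
    refine le_trans (Finset.sum_le_sum fun ti _ => cher ti) ?_
    rw [Finset.sum_const, Finset.card_univ]
    simp [Fintype.card_prod, nsmul_eq_mul]
    ring_nf
    nlinarith [Real.exp_nonneg (-(2 * m * δ ^ 2))]
  linarith

lemma exists_good_tuple {M n r : ℕ} (hn : 0 < n) (hr : 0 < r)
    (ε : ℝ) (hε : 0 < ε)
    (q : Fin M → ℝ) (hq0 : ∀ θ, 0 ≤ q θ) (hq1 : ∑ θ, q θ = 1)
    (V : Fin r → Fin n → Fin M → ℝ) (hV : ∀ t i θ, V t i θ ∈ Set.Icc (0:ℝ) 1) :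
    ∃ w : Fin r → Fin n,
      (∃ y : Fin ⌈2 * Real.log (4 * n * r) / ε ^ 2⌉₊ → Fin M,
        ∀ (t : Fin r) (i : Fin n), (∑ j, V t i (y j)) ≤ ∑ j, V t (w t) (y j)) ∧
      ∀ t i, ∑ θ, q θ * V t i θ ≤ (∑ θ, q θ * V t (w t) θ) + ε := by
  set m : ℕ := ⌈2 * Real.log (4 * n * r) / ε ^ 2⌉₊ with hm
  have hn1 : (1 : ℝ) ≤ n := by exact_mod_cast hn
  have hr1 : (1 : ℝ) ≤ r := by exact_mod_cast hr
  have hnr1 : (1 : ℝ) < 4 * n * r := by nlinarith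
  have hlogpos : 0 < Real.log (4 * n * r) := Real.log_pos hnr1
  have hmge : 2 * Real.log (4 * n * r) / ε ^ 2 ≤ (m : ℝ) := Nat.le_ceil _
  have hm1 : 1 ≤ m := by
    rw [hm]
    exact Nat.one_le_iff_ne_zero.mpr (by
      intro h
      have := Nat.ceil_eq_zero.mp h
      have hpos : 0 < 2 * Real.log (4 * n * r) / ε ^ 2 := by positivity
      linarith)
  have hmpos : (0 : ℝ) < m := by exact_mod_cast hm1
  set δ : ℝ := ε / 2 with hδdef
  have hδ : 0 < δ := by positivity
  have hsmall : 2 * ((n : ℝ) * r) * Real.exp (-(2 * m * δ ^ 2)) < 1 := by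
    have h1 : Real.log (4 * n * r) ≤ 2 * (m : ℝ) * δ ^ 2 := by
      have : 2 * (m : ℝ) * δ ^ 2 = (m : ℝ) * ε ^ 2 / 2 := by rw [hδdef]; ring
      rw [this]
      have hε2 : (0:ℝ) < ε ^ 2 := by positivity
      rw [div_le_iff₀ hε2] at hmge
      linarith
    have h2 : Real.exp (-(2 * m * δ ^ 2)) ≤ Real.exp (-(Real.log (4 * n * r))) :=
      Real.exp_le_exp.mpr (by linarith)
    have h3 : Real.exp (-(Real.log (4 * n * r))) = ((4 * n * r : ℝ))⁻¹ := by
      rw [Real.exp_neg, Real.exp_log (by linarith)]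
    have h4 : 2 * ((n : ℝ) * r) * ((4 * n * r : ℝ))⁻¹ = 1 / 2 := by
      field_simp
      ring
    calc 2 * ((n : ℝ) * r) * Real.exp (-(2 * m * δ ^ 2))
        ≤ 2 * ((n : ℝ) * r) * ((4 * n * r : ℝ))⁻¹ := by
          rw [← h3]
          exact mul_le_mul_of_nonneg_left h2 (by positivity)
      _ = 1 / 2 := h4
      _ < 1 := by norm_num
  obtain ⟨y, hy⟩ := exists_good_sample q hq0 hq1 V hV δ hδ hsmall
  have hnempty : (Finset.univ : Finset (Fin n)).Nonempty := ⟨⟨0, hn⟩, Finset.mem_univ _⟩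
  have hchoice : ∀ t : Fin r, ∃ i : Fin n, ∀ i' : Fin n,
      (∑ j, V t i' (y j)) ≤ ∑ j, V t i (y j) := by
    intro t
    obtain ⟨b, _, hb⟩ := Finset.exists_max_image Finset.univ
      (fun i => ∑ j, V t i (y j)) hnempty
    exact ⟨b, fun i' => hb i' (Finset.mem_univ _)⟩
  choose w hw using hchoice
  refine ⟨w, ⟨y, fun t i => hw t i⟩, ?_⟩
  intro t i
  have h1 := abs_lt.mp (hy t i)
  have h2 := abs_lt.mp (hy t (w t))
  have h3 := hw t i
  have key : (m : ℝ) * (∑ θ, q θ * V t i θ) < (m : ℝ) * ((∑ θ, q θ * V t (w t) θ) + ε) := by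
    have : (m : ℝ) * δ + (m : ℝ) * δ = (m : ℝ) * ε := by rw [hδdef]; ring
    nlinarith [h1.1, h1.2, h2.1, h2.2]
  have := (mul_lt_mul_iff_right₀ hmpos).mp key
  linarith

lemma le_fmax {ι : Type*} {W : Finset ι} {g : ι → ℝ} {a : ι} (ha : a ∈ W) : g a ≤ fmax W g := by
  rw [fmax, dif_pos ⟨a, ha⟩]
  exact Finset.le_sup' g ha

/-- There is a set of at most `k` winner tuples, each induced (as empirical argmax) by some
multiset of `⌈2 ln(4nr)/ε²⌉` states, whose welfare is within an additive `ε` of the optimal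
welfare over all sets of `k` winner tuples. -/
theorem winner_tuple_net (n r M k : ℕ) (hn : 0 < n) (hr : 0 < r) (ε : ℝ) (hε : 0 < ε)
    (lam : Fin M → ℝ) (hlam : lam ∈ stdSimplex ℝ (Fin M))
    (V : Fin r → Fin n → Fin M → ℝ) (hV : ∀ t i θ, V t i θ ∈ Set.Icc (0 : ℝ) 1)
    (ρ : Fin r → ℝ) (hρ : ρ ∈ stdSimplex ℝ (Fin r)) :
    ∃ W : Finset (Fin r → Fin n), W.card ≤ k ∧
      (∀ w ∈ W, ∃ y : Fin ⌈2 * Real.log (4 * n * r) / ε ^ 2⌉₊ → Fin M,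
        ∀ (t : Fin r) (i : Fin n), (∑ j, V t i (y j)) ≤ ∑ j, V t (w t) (y j)) ∧
      ∀ W' : Finset (Fin r → Fin n), W'.card = k →
        (∑ θ, fmax W' fun w => ∑ t, ρ t * lam θ * V t (w t) θ) - ε ≤
          ∑ θ, fmax W fun w => ∑ t, ρ t * lam θ * V t (w t) θ := by
  classical
  set F : Fin M → (Fin r → Fin n) → ℝ := fun θ w => ∑ t, ρ t * lam θ * V t (w t) θ with hF
  rcases Nat.eq_zero_or_pos M with hM | hM
  · subst hM
    exact ⟨∅, Nat.zero_le k, by simp, fun W' _ => by simp; linarith⟩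
  rcases Nat.eq_zero_or_pos k with hk | hk
  · subst hk
    refine ⟨∅, le_refl _, by simp, ?_⟩
    intro W' hW'
    rw [Finset.card_eq_zero] at hW'
    subst hW'
    simp [fmax]
    linarith
  set T : Finset (Finset (Fin r → Fin n)) := Finset.univ.filter (fun W' => W'.card = k) with hT
  by_cases hex : T.Nonempty
  swap
  · refine ⟨∅, Nat.zero_le k, by simp, ?_⟩
    intro W' hW'
    exact (hex ⟨W', Finset.mem_filter.mpr ⟨Finset.mem_univ _, hW'⟩⟩).elim
  obtain ⟨Ws, hWsT, hWsmax⟩ := Finset.exists_max_image T (fun W' => ∑ θ, fmax W' (F θ)) hex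
  have hWscard : Ws.card = k := (Finset.mem_filter.mp hWsT).2
  have hWsne : Ws.Nonempty := Finset.card_pos.mp (by rw [hWscard]; exact hk)
  have hargmax : ∀ θ : Fin M, ∃ w ∈ Ws, fmax Ws (F θ) = F θ w := by
    intro θ
    obtain ⟨w, hw, hweq⟩ := Finset.exists_mem_eq_sup' hWsne (F θ)
    exact ⟨w, hw, by rw [fmax, dif_pos hWsne]; exact hweq⟩
  choose ws hwsmem hwseq using hargmax
  set cell : (Fin r → Fin n) → Finset (Fin M) :=
    fun w' => Finset.univ.filter (fun θ => ws θ = w') with hcell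
  set L : (Fin r → Fin n) → ℝ := fun w' => ∑ θ ∈ cell w', lam θ with hL
  have hL0 : ∀ w', 0 ≤ L w' := fun w' => Finset.sum_nonneg fun θ _ => hlam.1 θ
  set qf : (Fin r → Fin n) → Fin M → ℝ := fun w' θ =>
    if 0 < L w' then (if ws θ = w' then lam θ else 0) / L w'
    else (if θ = ⟨0, hM⟩ then 1 else 0) with hq
  have hqf0 : ∀ w' θ, 0 ≤ qf w' θ := by
    intro w' θ
    rw [hq]
    dsimp only
    split
    · exact div_nonneg (by split; exacts [hlam.1 θ, le_refl 0]) (hL0 w')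
    · split <;> norm_num
  have hqf1 : ∀ w', ∑ θ, qf w' θ = 1 := by
    intro w'
    rw [hq]
    dsimp only
    split
    · rename_i hLpos
      rw [← Finset.sum_div]
      rw [show ∑ θ, (if ws θ = w' then lam θ else 0) = L w' from by
        rw [hL]; dsimp only; rw [Finset.sum_filter]]
      exact div_self hLpos.ne'
    · simp
  have hgood := fun w' => exists_good_tuple hn hr ε hε (qf w') (hqf0 w') (hqf1 w') V hV
  choose Φ hΦnet hΦgood using hgood
  refine ⟨Ws.image Φ, le_trans Finset.card_image_le (le_of_eq hWscard), ?_, ?_⟩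
  · intro w hw
    obtain ⟨w', _, rfl⟩ := Finset.mem_image.mp hw
    exact hΦnet w'
  intro W' hW'c
  have step1 : ∑ θ, fmax W' (F θ) ≤ ∑ θ, fmax Ws (F θ) :=
    hWsmax W' (Finset.mem_filter.mpr ⟨Finset.mem_univ _, hW'c⟩)
  have step2 : ∑ θ, fmax Ws (F θ) = ∑ θ, F θ (ws θ) :=
    Finset.sum_congr rfl fun θ _ => hwseq θ
  have step4 : ∑ θ, F θ (Φ (ws θ)) ≤ ∑ θ, fmax (Ws.image Φ) (F θ) :=
    Finset.sum_le_sum fun θ _ => le_fmax (Finset.mem_image_of_mem Φ (hwsmem θ))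
  -- fiberwise decomposition
  have hpart : ∀ G : Fin M → ℝ, ∑ w' ∈ Ws, ∑ θ ∈ cell w', G θ = ∑ θ, G θ := by
    intro G
    exact Finset.sum_fiberwise_of_maps_to (fun θ _ => hwsmem θ) G
  have sumL : ∑ w' ∈ Ws, L w' = 1 := by
    rw [hL]; dsimp only; rw [hpart lam]; exact hlam.2
  have swap : ∀ (w' : Fin r → Fin n) (v : Fin r → Fin n),
      ∑ θ ∈ cell w', F θ v = ∑ t, ρ t * ∑ θ ∈ cell w', lam θ * V t (v t) θ := by
    intro w' v
    rw [Finset.sum_comm]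
    exact Finset.sum_congr rfl fun t _ => by
      rw [Finset.mul_sum]
      exact Finset.sum_congr rfl fun θ _ => by ring
  have cellbd : ∀ w' ∈ Ws, ∑ θ ∈ cell w', F θ (ws θ)
      ≤ (∑ θ ∈ cell w', F θ (Φ (ws θ))) + ε * L w' := by
    intro w' _
    have hrw : ∀ v : Fin r → Fin n, (∀ θ ∈ cell w', F θ (v) = F θ (v)) := fun _ _ _ => rfl
    have e1 : ∑ θ ∈ cell w', F θ (ws θ) = ∑ θ ∈ cell w', F θ w' :=
      Finset.sum_congr rfl fun θ hθ => by rw [(Finset.mem_filter.mp hθ).2]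
    have e2 : ∑ θ ∈ cell w', F θ (Φ (ws θ)) = ∑ θ ∈ cell w', F θ (Φ w') :=
      Finset.sum_congr rfl fun θ hθ => by rw [(Finset.mem_filter.mp hθ).2]
    rw [e1, e2]
    rcases lt_or_ge 0 (L w') with hLpos | hLz
    · -- main case
      have hid : ∀ g : Fin M → ℝ, ∑ θ, qf w' θ * g θ = (∑ θ ∈ cell w', lam θ * g θ) / L w' := by
        intro g
        rw [Finset.sum_filter, Finset.sum_div]
        exact Finset.sum_congr rfl fun θ _ => by
          rw [hq]
          dsimp only
          rw [if_pos hLpos]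
          split
          · ring
          · simp
      have main : ∀ t, ∑ θ ∈ cell w', lam θ * V t (w' t) θ
          ≤ (∑ θ ∈ cell w', lam θ * V t (Φ w' t) θ) + ε * L w' := by
        intro t
        have h := hΦgood w' t (w' t)
        rw [hid (fun θ => V t (w' t) θ), hid (fun θ => V t (Φ w' t) θ)] at h
        have h3 := mul_le_mul_of_nonneg_right h (hL0 w')
        rw [div_mul_cancel₀ _ hLpos.ne', add_mul, div_mul_cancel₀ _ hLpos.ne'] at h3
        linarith [mul_comm ε (L w')]
      rw [swap w' w', swap w' (Φ w')]
      calc ∑ t, ρ t * ∑ θ ∈ cell w', lam θ * V t (w' t) θ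
          ≤ ∑ t, ρ t * ((∑ θ ∈ cell w', lam θ * V t (Φ w' t) θ) + ε * L w') :=
            Finset.sum_le_sum fun t _ => mul_le_mul_of_nonneg_left (main t) (hρ.1 t)
        _ = (∑ t, ρ t * ∑ θ ∈ cell w', lam θ * V t (Φ w' t) θ) + (∑ t, ρ t) * (ε * L w') := by
            rw [Finset.sum_mul, ← Finset.sum_add_distrib]
            exact Finset.sum_congr rfl fun t _ => by ring
        _ = (∑ t, ρ t * ∑ θ ∈ cell w', lam θ * V t (Φ w' t) θ) + ε * L w' := by
            rw [hρ.2, one_mul]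
    · -- L w' = 0
      have hLzero : L w' = 0 := le_antisymm hLz (hL0 w')
      have hlamzero : ∀ θ ∈ cell w', lam θ = 0 := by
        intro θ hθ
        have := (Finset.sum_eq_zero_iff_of_nonneg fun θ _ => hlam.1 θ).mp hLzero
        exact this θ hθ
      have z1 : ∑ θ ∈ cell w', F θ w' = 0 :=
        Finset.sum_eq_zero fun θ hθ => Finset.sum_eq_zero fun t _ => by
          rw [hlamzero θ hθ]; ring
      have z2 : ∑ θ ∈ cell w', F θ (Φ w') = 0 :=
        Finset.sum_eq_zero fun θ hθ => Finset.sum_eq_zero fun t _ => by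
          rw [hlamzero θ hθ]; ring
      rw [z1, z2, hLzero]
      norm_num
  have step3 : ∑ θ, F θ (ws θ) ≤ (∑ θ, F θ (Φ (ws θ))) + ε := by
    calc ∑ θ, F θ (ws θ) = ∑ w' ∈ Ws, ∑ θ ∈ cell w', F θ (ws θ) := (hpart _).symm
      _ ≤ ∑ w' ∈ Ws, ((∑ θ ∈ cell w', F θ (Φ (ws θ))) + ε * L w') :=
          Finset.sum_le_sum cellbd
      _ = (∑ w' ∈ Ws, ∑ θ ∈ cell w', F θ (Φ (ws θ))) + ε * ∑ w' ∈ Ws, L w' := by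
          rw [Finset.sum_add_distrib, Finset.mul_sum]
      _ = (∑ θ, F θ (Φ (ws θ))) + ε := by rw [hpart, sumL, mul_one]
  linarith
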